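/- Let A be a field of characteristic zero, B a finite-dimensional commutative A-algebra all of whose residue fields are A, and π : B → A an A-algebra homomorphism. Let L be an algebraically closed field extension of A, F a subfield of L containing A, and e : F → L ⊗[A] B an A-algebra homomorphism such that π^L ∘ e is the inclusion F ↪ L. Let F' = {x ∈ L : x is algebraic over F}. Then there exists an A-algebra homomorphism e' : F' → L ⊗[A] B extending e such that π^L ∘ e' is the inclusion F' ↪ L. -/

import Mathlib

/-- For an `A`-algebra homomorphism `ρ : B →ₐ[A] A`, the induced `A`-algebra homomorphism
`ρ^L : L ⊗[A] B → L`, determined by `l ⊗ b ↦ l • ρ b`. -/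
noncomputable def rhoHom (A L B : Type*) [CommSemiring A] [CommRing L] [Algebra A L]
    [CommRing B] [Algebra A B] (ρ : B →ₐ[A] A) : TensorProduct A L B →ₐ[A] L :=
  (Algebra.TensorProduct.rid A A L).toAlgHom.comp
    (Algebra.TensorProduct.map (AlgHom.id A L) ρ)

universe u v


/-- Extend a field embedding into an algebraically closed field along an algebraic extension. -/
theorem auxExtendHom {F F' K : Type*} [Field F] [Field F'] [Field K] [Algebra F F']
    [Algebra.IsAlgebraic F F'] [IsAlgClosed K] (σ : F →+* K) :
    ∃ τ : F' →+* K, ∀ x, τ (algebraMap F F' x) = σ x := by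
  letI : Algebra F K := σ.toAlgebra
  haveI : NoZeroSMulDivisors F K :=
    inferInstance
  haveI : NoZeroSMulDivisors F F' :=
    inferInstance
  exact ⟨(IsAlgClosed.lift (R := F) (S := F') (M := K)).toRingHom,
    fun x => (IsAlgClosed.lift (R := F) (S := F') (M := K)).commutes x⟩

/-- Lift an algebra hom from a separable extension along a nilpotent-kernel quotient. -/
theorem auxLift {F F' : Type u} {C : Type v} [Field F] [Field F'] [Algebra F F']
    [Algebra.IsSeparable F F'] [CommRing C] [Algebra F C]
    (N : Ideal C) (hN : IsNilpotent N) (g : F' →ₐ[F] C ⧸ N) :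
    ∃ g' : F' →ₐ[F] C, ∀ y, Ideal.Quotient.mk N (g' y) = g y := by
  let eF : ULift.{v} F ≃+* F := ULift.ringEquiv
  let eF' : ULift.{v} F' ≃+* F' := ULift.ringEquiv
  let eC : ULift.{u} C ≃+* C := ULift.ringEquiv
  letI : Algebra (ULift.{v} F) (ULift.{v} F') :=
    ((eF'.symm.toRingHom.comp (algebraMap F F')).comp eF.toRingHom).toAlgebra
  letI : Algebra (ULift.{v} F) (ULift.{u} C) :=
    ((eC.symm.toRingHom.comp (algebraMap F C)).comp eF.toRingHom).toAlgebra
  haveI : Algebra.IsSeparable (ULift.{v} F) (ULift.{v} F') :=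
    Algebra.IsSeparable.of_equiv_equiv eF.symm eF'.symm (by ext x; rfl)
  haveI := Algebra.FormallyEtale.of_isSeparable (ULift.{v} F) (ULift.{v} F')
  let Nu : Ideal (ULift.{u} C) := N.map (eC.symm : C →+* ULift.{u} C)
  have hNu : IsNilpotent Nu := by
    obtain ⟨n, hn⟩ := hN
    exact ⟨n, by rw [← Ideal.map_pow, hn]; simp⟩
  have hNmap : N = Nu.map (eC : ULift.{u} C →+* C) := by
    rw [Ideal.map_map]
    have : (eC : ULift.{u} C →+* C).comp (eC.symm : C →+* ULift.{u} C) = RingHom.id C := by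
      ext x; exact eC.apply_symm_apply x
    rw [this, Ideal.map_id]
  let qe : (ULift.{u} C) ⧸ Nu ≃+* C ⧸ N := Ideal.quotientEquiv Nu N eC hNmap
  have hqe : ∀ x, qe (Ideal.Quotient.mk Nu x) = Ideal.Quotient.mk N (eC x) :=
    fun x => Ideal.quotientEquiv_mk Nu N eC hNmap x
  let gu : ULift.{v} F' →ₐ[ULift.{v} F] (ULift.{u} C) ⧸ Nu :=
    { toRingHom := ((qe.symm : C ⧸ N →+* (ULift.{u} C) ⧸ Nu).comp g.toRingHom).comp
        (eF'.toRingHom)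
      commutes' := by
        intro x
        show qe.symm (g (algebraMap F F' (eF x))) =
          Ideal.Quotient.mk Nu ((eC.symm : C →+* ULift.{u} C) (algebraMap F C (eF x)))
        rw [g.commutes]
        apply qe.injective
        rw [RingEquiv.apply_symm_apply, hqe]
        rfl }
  let g'u := Algebra.FormallySmooth.lift Nu hNu gu
  let g'r : F' →+* C :=
    (eC.toRingHom.comp g'u.toRingHom).comp (eF'.symm : F' →+* ULift.{v} F')
  refine ⟨{ toRingHom := g'r, commutes' := ?_ }, ?_⟩
  · intro x
    show eC (g'u (eF'.symm (algebraMap F F' x))) = algebraMap F C x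
    have h1 : eF'.symm (algebraMap F F' x) =
        algebraMap (ULift.{v} F) (ULift.{v} F') (eF.symm x) := rfl
    rw [h1, g'u.commutes]
    show eC (eC.symm (algebraMap F C (eF (eF.symm x)))) = algebraMap F C x
    rw [RingEquiv.apply_symm_apply, RingEquiv.apply_symm_apply]
  · intro y
    show Ideal.Quotient.mk N (eC (g'u (eF'.symm y))) = g y
    rw [← hqe, Algebra.FormallySmooth.mk_lift]
    show qe (qe.symm (g (eF' (eF'.symm y)))) = g y
    rw [RingEquiv.apply_symm_apply, RingEquiv.apply_symm_apply]

set_option maxHeartbeats 1600000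
set_option synthInstance.maxHeartbeats 400000

/-- Let `A` be a field of characteristic zero, `B` a finite-dimensional
commutative `A`-algebra all of whose residue fields are `A`, and `π : B → A` an `A`-algebra
homomorphism.  Let `L` be an algebraically closed field extension of `A`, `F` a subfield of `L`
containing `A`, and `e : F → L ⊗[A] B` an `A`-algebra homomorphism with `π^L ∘ e` the inclusion
`F ↪ L`.  Let `F' = {x ∈ L : x is algebraic over F}`.  Then there is an `A`-algebra
homomorphism `e' : F' → L ⊗[A] B` extending `e` with `π^L ∘ e'` the inclusion `F' ↪ L`. -/
theorem exists_extension_to_relative_algebraic_closure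
    {A B L : Type*} [Field A] [CharZero A] [CommRing B] [Algebra A B]
    [FiniteDimensional A B]
    (hres : ∀ m : Ideal B, m.IsMaximal → Function.Bijective (algebraMap A (B ⧸ m)))
    (π : B →ₐ[A] A)
    [Field L] [Algebra A L] [IsAlgClosed L]
    (F : IntermediateField A L)
    (F' : Subalgebra A L) (hF' : ∀ x : L, x ∈ F' ↔ IsAlgebraic F x)
    (e : F →ₐ[A] TensorProduct A L B)
    (he : ∀ x : F, rhoHom A L B π (e x) = (x : L)) :
    ∃ e' : F' →ₐ[A] TensorProduct A L B,
      (∀ (x : F) (hx : (x : L) ∈ F'), e' ⟨(x : L), hx⟩ = e x) ∧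
      ∀ y : F', rhoHom A L B π (e' y) = (y : L) := by
  classical
  set C := TensorProduct A L B with hCdef
  let pr : C →+* L := (rhoHom A L B π).toRingHom
  -- finiteness instances
  haveI : Module.Finite L C := inferInstance
  haveI : IsNoetherian L C := inferInstance
  haveI : IsNoetherianRing C := isNoetherian_of_tower L inferInstance
  haveI : IsArtinianRing C := IsArtinianRing.of_finite L C
  haveI : Finite {I : Ideal C | I.IsMaximal} := (IsArtinianRing.setOfPred_isMaximal_finite C).to_subtype
  -- pr is surjective
  have hps : Function.Surjective pr := by
    intro l
    refine ⟨(l ⊗ₜ[A] (1 : B) : C), ?_⟩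
    show (Algebra.TensorProduct.rid A A L)
      ((Algebra.TensorProduct.map (AlgHom.id A L) π) (l ⊗ₜ[A] (1 : B))) = l
    rw [Algebra.TensorProduct.map_tmul]
    simp
  let m0 : {I : Ideal C | I.IsMaximal} :=
    ⟨RingHom.ker pr, RingHom.ker_isMaximal_of_surjective pr hps⟩
  let χ : C ⧸ RingHom.ker pr ≃+* L := RingHom.quotientKerEquivOfSurjective hps
  have hχ : ∀ c : C, χ (Ideal.Quotient.mk (RingHom.ker pr) c) = pr c :=
    fun c => RingHom.kerLift_mk pr c
  -- the nilradical and the decomposition of the reduced quotient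
  have hN : IsNilpotent (nilradical C) := IsNoetherianRing.isNilpotent_nilradical C
  let equiv : C ⧸ nilradical C ≃+* ∀ I : {I : Ideal C | I.IsMaximal}, C ⧸ I.1 :=
    (Ideal.quotEquivOfEq (by
      rw [IsArtinianRing.nilradical_eq_iInf]
      apply le_antisymm
      · exact le_iInf fun I => iInf_le_of_le ⟨I.1, I.2⟩ le_rfl
      · exact le_iInf fun I => iInf_le_of_le ⟨I.1, I.2⟩ le_rfl :
        nilradical C = ⨅ I : {I : Ideal C | I.IsMaximal}, I.1)).trans
      (Ideal.quotientInfRingEquivPiQuotient (fun I : {I : Ideal C | I.IsMaximal} => I.1)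
        fun I J h => by
          haveI : I.1.IsMaximal := I.2
          haveI : J.1.IsMaximal := J.2
          exact Ideal.isCoprime_of_isMaximal (fun h' => h (Subtype.ext h')))
  have hequiv : ∀ (c : C) (I : {I : Ideal C | I.IsMaximal}),
      equiv (Ideal.Quotient.mk (nilradical C) c) I = Ideal.Quotient.mk I.1 c := by
    intro c I
    simp only [equiv, IsArtinianRing.quotNilradicalEquivPi, RingEquiv.trans_apply,
      Ideal.quotEquivOfEq_mk]
    exact Ideal.quotientInfToPiQuotient_mk' _ c I
  -- characteristic zero
  haveI : CharZero L := charZero_of_injective_algebraMap (algebraMap A L).injective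
  haveI : CharZero F := charZero_of_injective_algebraMap (algebraMap A F).injective
  -- F' is a field
  have hinv : ∀ x ∈ F', x⁻¹ ∈ F' := fun x hx => (hF' _).2 ((hF' x).1 hx).inv
  letI : Field F' := inferInstanceAs (Field (F'.toIntermediateField hinv))
  -- F sits inside F'
  have hmem : ∀ x : F, (x : L) ∈ F' := fun x =>
    (hF' _).2 (by simpa using isAlgebraic_algebraMap (A := L) x)
  let ι : F →+* F' :=
    { toFun := fun x => ⟨(x : L), hmem x⟩
      map_one' := rfl
      map_mul' := fun x y => Subtype.ext (by push_cast; ring)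
      map_zero' := rfl
      map_add' := fun x y => Subtype.ext (by push_cast; ring) }
  letI : Algebra F F' := ι.toAlgebra
  let val' : F' →ₐ[F] L :=
    { toRingHom := ((F'.val : F' →ₐ[A] L) : F' →+* L)
      commutes' := fun x => rfl }
  haveI : Algebra.IsAlgebraic F F' := by
    constructor
    intro y
    have h1 : IsAlgebraic F (y : L) := (hF' _).1 y.2
    exact (isAlgebraic_algHom_iff val' (fun a b hab => Subtype.ext hab)).mp h1
  haveI : Algebra.IsIntegral F F' := Algebra.IsAlgebraic.isIntegral
  haveI : Algebra.IsSeparable F F' := Algebra.IsSeparable.of_integral F F'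
  -- C as an F-algebra via e
  letI : Algebra F C := (e : F →+* C).toAlgebra
  letI : Algebra F (C ⧸ nilradical C) := Ideal.Quotient.algebra F
  -- componentwise extensions
  have key : ∀ I : {I : Ideal C | I.IsMaximal}, ∃ τ : F' →+* C ⧸ I.1,
      ∀ x : F, τ (ι x) = Ideal.Quotient.mk I.1 (e x) := by
    intro I
    haveI : I.1.IsMaximal := I.2
    haveI : Module.Finite L (C ⧸ I.1) :=
      Module.Finite.of_surjective (Ideal.Quotient.mkₐ L I.1).toLinearMap
        Ideal.Quotient.mk_surjective
    haveI : Algebra.IsIntegral L (C ⧸ I.1) := Algebra.IsIntegral.of_finite L _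
    have hbij : Function.Bijective (algebraMap L (C ⧸ I.1)) :=
      ⟨(algebraMap L (C ⧸ I.1)).injective,
        IsAlgClosed.algebraMap_bijective_of_isIntegral.2⟩
    let ψ : L ≃+* C ⧸ I.1 := RingEquiv.ofBijective (algebraMap L (C ⧸ I.1)) hbij
    obtain ⟨τ', hτ'⟩ := auxExtendHom (F := F) (F' := F')
      (ψ.symm.toRingHom.comp ((Ideal.Quotient.mk I.1).comp (e : F →+* C)))
    refine ⟨ψ.toRingHom.comp τ', fun x => ?_⟩
    show ψ (τ' (ι x)) = _
    rw [show ι x = algebraMap F F' x from rfl, hτ']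
    show ψ (ψ.symm _) = _
    rw [RingEquiv.apply_symm_apply]
    rfl
  choose τbase hτbase using key
  -- the special component at m0
  let τ0 : F' →+* C ⧸ m0.1 :=
    χ.symm.toRingHom.comp ((F'.val : F' →ₐ[A] L) : F' →+* L)
  have hτ0 : ∀ x : F, τ0 (ι x) = Ideal.Quotient.mk m0.1 (e x) := by
    intro x
    show χ.symm ((x : L)) = _
    apply χ.injective
    rw [RingEquiv.apply_symm_apply, hχ]
    exact (he x).symm
  let τ := Function.update τbase m0 τ0
  have hτmk : ∀ (I : {I : Ideal C | I.IsMaximal}) (x : F),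
      τ I (ι x) = Ideal.Quotient.mk I.1 (e x) := by
    intro I x
    rcases eq_or_ne I m0 with h | h
    · subst h
      show Function.update τbase m0 τ0 m0 (ι x) = Ideal.Quotient.mk m0.1 (e x)
      rw [Function.update_self]
      exact hτ0 x
    · show Function.update τbase m0 τ0 I (ι x) = _
      rw [Function.update_of_ne h]
      exact hτbase I x
  have hτm0 : ∀ y : F', τ m0 y = χ.symm (y : L) := by
    intro y
    show Function.update τbase m0 τ0 m0 y = _
    rw [Function.update_self]
    rfl
  -- assemble the map into the reduced quotient
  let g0 : F' →+* C ⧸ nilradical C := equiv.symm.toRingHom.comp (Pi.ringHom τ)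
  have hg0 : ∀ x : F, g0 (ι x) = Ideal.Quotient.mk (nilradical C) (e x) := by
    intro x
    show equiv.symm (fun I => τ I (ι x)) = _
    apply equiv.injective
    rw [RingEquiv.apply_symm_apply]
    funext I
    rw [hequiv]
    exact hτmk I x
  let g0a : F' →ₐ[F] C ⧸ nilradical C :=
    { toRingHom := g0
      commutes' := fun x => by
        show g0 (ι x) = algebraMap F (C ⧸ nilradical C) x
        rw [hg0]; rfl }
  obtain ⟨g1, hg1⟩ := auxLift (nilradical C) hN g0a
  -- the final map
  refine ⟨{ toRingHom := (g1 : F' →+* C), commutes' := ?_ }, ?_, ?_⟩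
  · intro a
    show g1 (algebraMap A F' a) = algebraMap A C a
    have h2 : algebraMap A F' a = ι (algebraMap A F a) := by
      apply Subtype.ext
      show algebraMap A L a = ((algebraMap A F a : F) : L)
      rw [IsScalarTower.algebraMap_apply A F L a]
      rfl
    rw [h2]
    have h3 : g1 (ι (algebraMap A F a)) = algebraMap F C (algebraMap A F a) :=
      g1.commutes _
    rw [h3]
    show e (algebraMap A F a) = algebraMap A C a
    exact e.commutes a
  · intro x hx
    show g1 ⟨(x : L), hx⟩ = e x
    have h4 : (⟨(x : L), hx⟩ : F') = ι x := rfl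
    rw [h4]
    exact g1.commutes x
  · intro y
    show pr (g1 y) = (y : L)
    rw [← hχ (g1 y)]
    have h5 : Ideal.Quotient.mk m0.1 (g1 y)
        = equiv (Ideal.Quotient.mk (nilradical C) (g1 y)) m0 := (hequiv _ m0).symm
    show χ (Ideal.Quotient.mk m0.1 (g1 y)) = (y : L)
    rw [h5, hg1 y]
    show χ (equiv (equiv.symm (Pi.ringHom τ y)) m0) = (y : L)
    rw [RingEquiv.apply_symm_apply]
    show χ (τ m0 y) = (y : L)
    rw [hτm0, RingEquiv.apply_symm_apply]
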